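/- Let f = P/Q be a rational function over ℂ with deg Q ≥ deg P + 2. Then the sum over all poles p of f of the residue of f at p equals zero. -/

import Mathlib

open Complex Filter Topology

section Aux
open Polynomial Metric Finset

lemma circleIntegral_finset_sum {ι : Type*} (s : Finset ι) (f : ι → ℂ → ℂ) (c : ℂ) (R : ℝ)
    (h : ∀ i ∈ s, CircleIntegrable (f i) c R) :
    (∮ z in C(c, R), ∑ i ∈ s, f i z) = ∑ i ∈ s, ∮ z in C(c, R), f i z := by
  simp only [circleIntegral, smul_sum]
  rw [intervalIntegral.integral_finset_sum]
  exact fun i hi => (h i hi).out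

lemma taylor_coeff_of_natDegree_le (r : ℂ) (f : ℂ[X]) (k : ℕ) (h : f.natDegree ≤ k) :
    (Polynomial.taylor r f).coeff k = f.coeff k := by
  rw [taylor_coeff]
  have : hasseDeriv k f = C (f.coeff k) := by
    ext n
    rw [hasseDeriv_coeff, coeff_C]
    rcases Nat.eq_zero_or_pos n with rfl | hn
    · simp
    · simp only [if_neg hn.ne']
      rw [coeff_eq_zero_of_natDegree_lt (by omega), mul_zero]
  simp [this]

/-- key single-pole circle integral -/
lemma pole_integral (c : ℂ) (m : ℕ) (hm : 1 ≤ m) (r : ℂ[X]) (hr : r.natDegree < m)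
    {ε : ℝ} (hε : 0 < ε) :
    (∮ z in C(c, ε), r.eval z / (z - c) ^ m) =
      2 * Real.pi * Complex.I * r.coeff (m - 1) := by
  have hEq : Set.EqOn (fun z => r.eval z / (z - c) ^ m)
      (fun z => ∑ k ∈ Finset.range m, (Polynomial.taylor c r).coeff k * (z - c) ^ ((k : ℤ) - m))
      (sphere c ε) := by
    intro z hz
    have hzc : z - c ≠ 0 := sub_ne_zero.2 (by
      intro h; rw [mem_sphere_iff_norm, h, sub_self, norm_zero] at hz; exact hε.ne hz)
    have h1 : r.eval z = (Polynomial.taylor c r).eval (z - c) := by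
      rw [Polynomial.taylor_eval, sub_add_cancel]
    have h2 : (Polynomial.taylor c r).eval (z - c)
        = ∑ k ∈ Finset.range m, (Polynomial.taylor c r).coeff k * (z - c) ^ k :=
      Polynomial.eval_eq_sum_range' (by rwa [natDegree_taylor]) _
    simp only [h1, h2, Finset.sum_div]
    refine Finset.sum_congr rfl fun k _ => ?_
    rw [zpow_sub₀ hzc, zpow_natCast, zpow_natCast, mul_div_assoc]
  rw [circleIntegral.integral_congr hε.le hEq]
  have hint : ∀ k ∈ Finset.range m, CircleIntegrable
      (fun z => (Polynomial.taylor c r).coeff k * (z - c) ^ ((k : ℤ) - m)) c ε := by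
    intro k _
    refine ContinuousOn.circleIntegrable hε.le ?_
    refine continuousOn_const.mul (((continuous_id.sub continuous_const).continuousOn).zpow₀ _ ?_)
    intro z hz
    left
    refine sub_ne_zero.2 fun h => ?_
    simp only [id_eq] at h
    rw [mem_sphere_iff_norm, h, sub_self, norm_zero] at hz
    exact hε.ne hz
  rw [circleIntegral_finset_sum _ _ _ _ hint]
  rw [Finset.sum_eq_single_of_mem (m - 1) (Finset.mem_range.2 (by omega))]
  · rw [circleIntegral.integral_const_mul]
    have h3 : ((m - 1 : ℕ) : ℤ) - m = -1 := by push_cast [Nat.cast_sub hm]; ring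
    rw [h3]
    have h4 : (∮ z in C(c, ε), (z - c) ^ (-1 : ℤ)) = 2 * Real.pi * Complex.I := by
      simp only [zpow_neg, zpow_one]
      exact circleIntegral.integral_sub_inv_of_mem_ball (mem_ball_self hε)
    rw [h4, taylor_coeff_of_natDegree_le _ _ _ (by omega)]
    ring
  · intro k hk hne
    rw [circleIntegral.integral_const_mul,
      circleIntegral.integral_sub_zpow_of_ne (by simp only [Finset.mem_range] at hk; omega),
      mul_zero]

lemma pole_integral_zero (p c : ℂ) (m : ℕ) (r : ℂ[X]) {ε : ℝ} (hε : 0 ≤ ε)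
    (h : ∀ z ∈ closedBall p ε, z ≠ c) :
    (∮ z in C(p, ε), r.eval z / (z - c) ^ m) = 0 := by
  have hd : ∀ z ∈ closedBall p ε, DifferentiableAt ℂ (fun z => r.eval z / (z - c) ^ m) z := by
    intro z hz
    exact (r.differentiableAt).div ((differentiableAt_id.sub_const c).pow m)
      (pow_ne_zero _ (sub_ne_zero.2 (h z hz)))
  refine circleIntegral_eq_zero_of_differentiable_on_off_countable hε Set.countable_empty
    (fun z hz => (hd z hz).continuousAt.continuousWithinAt) ?_
  exact fun z hz => hd z (ball_subset_closedBall hz.1)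

lemma coeff_mul_monic_eq (r G : ℂ[X]) (hG : G.Monic) (e : ℕ) (hr : r.natDegree ≤ e) :
    (r * G).coeff (e + G.natDegree) = r.coeff e := by
  rw [coeff_mul, Finset.sum_eq_single (e, G.natDegree)]
  · rw [hG.coeff_natDegree, mul_one]
  · rintro ⟨i, j⟩ hij hne
    rw [Finset.HasAntidiagonal.mem_antidiagonal] at hij
    rcases lt_or_ge e i with h | h
    · rw [coeff_eq_zero_of_natDegree_lt (lt_of_le_of_lt hr h), zero_mul]
    · have hj : G.natDegree < j := by
        rcases lt_or_ge G.natDegree j with h' | h'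
        · exact h'
        · exfalso; apply hne
          have hi : i = e := by omega
          have : j = G.natDegree := by omega
          rw [hi, this]
      rw [coeff_eq_zero_of_natDegree_lt hj, mul_zero]
  · intro h; exact absurd (Finset.HasAntidiagonal.mem_antidiagonal.2 (rfl : e + G.natDegree = e + G.natDegree)) h

end Aux

open Polynomial Metric in
/-- Global residue theorem for a rational function `f = P/Q` with `deg Q ≥ deg P + 2`:
the residues of `f` at the roots of `Q` (defined via small circle integrals,
`Res_{z=p} f = (2πi)⁻¹ ∮_{|z−p|=ε} f` for all sufficiently small `ε > 0`) sum to zero. -/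
theorem stmt5 (P Q : Polynomial ℂ) (hQ : Q ≠ 0)
    (hdeg : P.degree + 2 ≤ Q.degree) (res : ℂ → ℂ)
    (hres : ∀ p ∈ Q.roots.toFinset, ∀ᶠ ε in 𝓝[>] (0 : ℝ),
      (∮ z in C(p, ε), P.eval z / Q.eval z) = 2 * Real.pi * Complex.I * res p) :
    ∑ p ∈ Q.roots.toFinset, res p = 0 := by
  classical
  set s := Q.roots.toFinset with hs
  set lc := Q.leadingCoeff with hlc
  have hlc0 : lc ≠ 0 := leadingCoeff_ne_zero.2 hQ
  set m : ℂ → ℕ := fun p => Q.rootMultiplicity p with hmdef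
  set g : ℂ → ℂ[X] := fun p => (X - C p) ^ (m p) with hgdef
  have hroot : ∀ p ∈ s, Q.IsRoot p := fun p hp =>
    isRoot_of_mem_roots (Multiset.mem_toFinset.1 hp)
  have hm1 : ∀ p ∈ s, 1 ≤ m p := fun p hp => (Q.rootMultiplicity_pos hQ).2 (hroot p hp)
  have hgmonic : ∀ p ∈ s, (g p).Monic := fun p _ => (monic_X_sub_C p).pow _
  have hgne : ∀ p ∈ s, g p ≠ 0 := fun p hp => (hgmonic p hp).ne_zero
  have hgnatdeg : ∀ p, (g p).natDegree = m p := fun p => by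
    rw [hgdef]; simp [natDegree_pow]
  -- factorization of Q
  have hfact : Q = C lc * ∏ p ∈ s, g p := by
    conv_lhs => rw [(IsAlgClosed.splits Q).eq_prod_roots]
    congr 1
    rw [Finset.prod_multiset_map_count]
    exact Finset.prod_congr rfl fun p _ => by rw [count_roots]
  set D : ℕ := ∑ p ∈ s, m p with hD
  have hprodnatdeg : (∏ p ∈ s, g p).natDegree = D := by
    rw [natDegree_prod _ _ (fun p hp => hgne p hp)]
    exact Finset.sum_congr rfl fun p _ => hgnatdeg p
  have hQnatdeg : Q.natDegree = D := by
    rw [hfact, natDegree_C_mul hlc0, hprodnatdeg]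
  have hQdeg : Q.degree = (D : ℕ) := by
    rw [degree_eq_natDegree hQ, hQnatdeg]
  have hmD : ∀ p ∈ s, m p ≤ D := fun p hp =>
    Finset.single_le_sum (fun q _ => Nat.zero_le (m q)) hp
  -- partial fractions
  have hcop : Set.Pairwise ↑s fun i j => IsCoprime (g i) (g j) := by
    intro i _ j _ hij
    exact ((isCoprime_X_sub_C_of_isUnit_sub (IsUnit.mk0 _ (sub_ne_zero.2 hij))).pow)
  obtain ⟨q, r, hrdeg, hK⟩ :=
    div_eq_quo_add_sum_rem_div (FractionRing ℂ[X]) (C lc⁻¹ * P) hgmonic hcop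
  set K := FractionRing ℂ[X]
  set A := algebraMap ℂ[X] K with hA
  have hK' : A (C lc⁻¹ * P) / ∏ i ∈ s, A (g i) = A q + ∑ i ∈ s, A (r i) / A (g i) := hK
  have hinj : Function.Injective A := IsFractionRing.injective ℂ[X] K
  have hA0 : ∀ i ∈ s, A (g i) ≠ 0 := by
    intro i hi h
    exact hgne i hi (hinj (by rw [h, map_zero]))
  have hprod0 : (∏ i ∈ s, A (g i)) ≠ 0 := Finset.prod_ne_zero_iff.2 hA0
  have hpoly : C lc⁻¹ * P = q * ∏ i ∈ s, g i + ∑ i ∈ s, r i * ∏ j ∈ s.erase i, g j := by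
    apply hinj
    rw [div_eq_iff hprod0] at hK'
    rw [show A (C lc⁻¹ * P) = (A q + ∑ i ∈ s, A (r i) / A (g i)) * ∏ i ∈ s, A (g i) from hK']
    simp only [map_add, map_mul, map_sum, map_prod]
    rw [add_mul, Finset.sum_mul]
    congr 1
    refine Finset.sum_congr rfl fun i hi => ?_
    rw [← Finset.prod_erase_mul s _ hi, ← mul_assoc, mul_comm (A (r i) / A (g i)) _,
      mul_assoc, div_mul_cancel₀ _ (hA0 i hi), mul_comm]
  -- degrees of r i
  have hrle : ∀ i ∈ s, (r i).natDegree ≤ m i - 1 := by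
    intro i hi
    rcases eq_or_ne (r i) 0 with h | h
    · rw [h, natDegree_zero]; omega
    · have hlt := hrdeg i hi
      rw [hgdef] at hlt
      simp only [degree_pow, degree_X_sub_C] at hlt
      have h2 : (r i).natDegree < m i := by
        rw [natDegree_lt_iff_degree_lt h]
        exact_mod_cast (by simpa using hlt)
      omega
  have hGdeg : ∀ i ∈ s, (∏ j ∈ s.erase i, g j).natDegree = D - m i := by
    intro i hi
    rw [natDegree_prod _ _ (fun j hj => hgne j (Finset.mem_of_mem_erase hj))]
    have h1 := Finset.add_sum_erase s m hi
    have h2 : ∑ j ∈ s.erase i, (g j).natDegree = ∑ j ∈ s.erase i, m j :=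
      Finset.sum_congr rfl fun j _ => hgnatdeg j
    omega
  have hPnat : P ≠ 0 → P.natDegree + 2 ≤ D := by
    intro hP
    have h1 : P.degree + 2 ≤ (Q.natDegree : ℕ∞) := by
      rwa [degree_eq_natDegree hQ] at hdeg
    rw [degree_eq_natDegree hP, hQnatdeg] at h1
    have h2 : ((P.natDegree + 2 : ℕ) : WithBot ℕ) ≤ (D : WithBot ℕ) := by push_cast; exact h1
    exact WithBot.coe_le_coe.1 h2
  have hPcoeff : P.coeff (D - 1) = 0 := by
    rcases eq_or_ne P 0 with rfl | hP
    · simp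
    · exact coeff_eq_zero_of_natDegree_lt (by have := hPnat hP; omega)
  have hCPdeg : (C lc⁻¹ * P).degree < (D : ℕ) := by
    rcases eq_or_ne P 0 with rfl | hP
    · simp only [mul_zero, degree_zero]; exact WithBot.bot_lt_coe D
    · calc (C lc⁻¹ * P).degree ≤ (C lc⁻¹).degree + P.degree := degree_mul_le _ _
        _ ≤ 0 + P.degree := add_le_add_left (degree_C_le) _
        _ = P.degree := zero_add _
        _ < (D : ℕ) := by
            rw [degree_eq_natDegree hP, Nat.cast_lt]
            have := hPnat hP; omega
  have htermdeg : ∀ i ∈ s, (r i * ∏ j ∈ s.erase i, g j).degree < (D : ℕ) := by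
    intro i hi
    rcases eq_or_ne (r i * ∏ j ∈ s.erase i, g j) 0 with h | h
    · rw [h, degree_zero]; exact WithBot.bot_lt_coe D
    · rw [degree_eq_natDegree h, Nat.cast_lt]
      calc (r i * ∏ j ∈ s.erase i, g j).natDegree
          ≤ (r i).natDegree + (∏ j ∈ s.erase i, g j).natDegree := natDegree_mul_le
        _ < D := by
            have := hrle i hi; have := hm1 i hi; have := hmD i hi
            rw [hGdeg i hi]; omega
  have hSdeg : (∑ i ∈ s, r i * ∏ j ∈ s.erase i, g j).degree < (D : ℕ) :=
    lt_of_le_of_lt (degree_sum_le _ _)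
      ((Finset.sup_lt_iff (WithBot.bot_lt_coe D)).2 htermdeg)
  have hproddeg : (∏ p ∈ s, g p).degree = (D : ℕ) := by
    rw [degree_eq_natDegree (Finset.prod_ne_zero_iff.2 hgne), hprodnatdeg]
  have hq0 : q = 0 := by
    by_contra hq
    have h1 : ((D : ℕ) : WithBot ℕ) ≤ (q * ∏ i ∈ s, g i).degree := by
      rw [degree_mul, hproddeg]
      calc ((D : ℕ) : WithBot ℕ) = 0 + ((D : ℕ) : WithBot ℕ) := (zero_add _).symm
        _ ≤ q.degree + ((D : ℕ) : WithBot ℕ) :=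
            add_le_add_left (zero_le_degree_iff.2 hq) _
    have h2 : (q * ∏ i ∈ s, g i).degree < (D : ℕ) := by
      have heq : q * ∏ i ∈ s, g i
          = C lc⁻¹ * P - ∑ i ∈ s, r i * ∏ j ∈ s.erase i, g j := by
        rw [hpoly]; ring
      rw [heq]
      exact lt_of_le_of_lt (degree_sub_le _ _) (max_lt hCPdeg hSdeg)
    exact absurd h1 (not_le.2 h2)
  rw [hq0, zero_mul, zero_add] at hpoly
  -- sum of top coefficients is zero
  have hsumcoeff : ∑ i ∈ s, (r i).coeff (m i - 1) = 0 := by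
    have hc := congrArg (fun p : ℂ[X] => p.coeff (D - 1)) hpoly
    simp only [coeff_C_mul, hPcoeff, mul_zero, finset_sum_coeff] at hc
    calc ∑ i ∈ s, (r i).coeff (m i - 1)
        = ∑ i ∈ s, (r i * ∏ j ∈ s.erase i, g j).coeff (D - 1) := by
          refine Finset.sum_congr rfl fun i hi => ?_
          have he : D - 1 = (m i - 1) + (∏ j ∈ s.erase i, g j).natDegree := by
            rw [hGdeg i hi]; have := hm1 i hi; have := hmD i hi; omega
          rw [he, coeff_mul_monic_eq _ _
            (monic_prod_of_monic _ _ fun j hj => hgmonic j (Finset.mem_of_mem_erase hj))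
            _ (hrle i hi)]
      _ = 0 := hc.symm
  -- pointwise identity
  have hpt : ∀ z : ℂ, (∀ j ∈ s, z ≠ j) →
      P.eval z / Q.eval z = ∑ j ∈ s, (r j).eval z / (z - j) ^ (m j) := by
    intro z hz
    have hzj : ∀ j ∈ s, z - j ≠ 0 := fun j hj => sub_ne_zero.2 (hz j hj)
    have hGz : ∀ j, (g j).eval z = (z - j) ^ (m j) := fun j => by
      rw [hgdef]; simp
    have hQz : Q.eval z = lc * ∏ j ∈ s, (z - j) ^ (m j) := by
      rw [hfact, eval_mul, eval_C, eval_prod]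
      congr 1
      exact Finset.prod_congr rfl fun j _ => hGz j
    have hPz : lc⁻¹ * P.eval z
        = ∑ i ∈ s, (r i).eval z * ∏ j ∈ s.erase i, (z - j) ^ (m j) := by
      have := congrArg (eval z) hpoly
      simpa [eval_finset_sum, eval_prod, hGz] using this
    have hprodz : (∏ j ∈ s, (z - j) ^ (m j)) ≠ 0 :=
      Finset.prod_ne_zero_iff.2 fun j hj => pow_ne_zero _ (hzj j hj)
    have key : ∀ i ∈ s, (r i).eval z / (z - i) ^ (m i)
        = ((r i).eval z * ∏ j ∈ s.erase i, (z - j) ^ (m j)) / ∏ j ∈ s, (z - j) ^ (m j) := by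
      intro i hi
      rw [← Finset.prod_erase_mul s _ hi]
      have hpe : (∏ j ∈ s.erase i, (z - j) ^ (m j)) ≠ 0 :=
        Finset.prod_ne_zero_iff.2 fun j hj =>
          pow_ne_zero _ (hzj j (Finset.mem_of_mem_erase hj))
      rw [mul_comm ((r i).eval z) (∏ j ∈ s.erase i, (z - j) ^ (m j)),
        mul_div_mul_left _ _ hpe]
    rw [Finset.sum_congr rfl key, ← Finset.sum_div, ← hPz, hQz]
    rw [div_eq_div_iff (mul_ne_zero hlc0 hprodz) hprodz]
    field_simp
  -- residue values
  have hval : ∀ p ∈ s, res p = (r p).coeff (m p - 1) := by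
    intro p hp
    obtain ⟨δ, hδ0, hδ⟩ : ∃ δ > 0, ∀ j ∈ s, j ≠ p → δ ≤ dist p j := by
      by_cases hne : (s.erase p).Nonempty
      · refine ⟨(s.erase p).inf' hne fun j => dist p j, ?_, ?_⟩
        · rw [gt_iff_lt, Finset.lt_inf'_iff]
          intro j hj
          exact dist_pos.2 fun h => (Finset.mem_erase.1 hj).1 h.symm
        · intro j hj hjp
          exact Finset.inf'_le _ (Finset.mem_erase.2 ⟨hjp, hj⟩)
      · refine ⟨1, one_pos, fun j hj hjp => absurd ⟨hjp, hj⟩ fun h => hne ⟨j, Finset.mem_erase.2 h⟩⟩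
    have hclaim : ∀ ε ∈ Set.Ioo (0 : ℝ) δ,
        (∮ z in C(p, ε), P.eval z / Q.eval z)
          = 2 * Real.pi * Complex.I * (r p).coeff (m p - 1) := by
      rintro ε ⟨hε0, hεδ⟩
      have hsphere : ∀ z ∈ sphere p ε, ∀ j ∈ s, z ≠ j := by
        intro z hz j hj
        rw [mem_sphere_iff_norm] at hz
        rcases eq_or_ne j p with rfl | hjp
        · intro h; rw [h, sub_self, norm_zero] at hz; exact hε0.ne hz
        · intro h
          have h1 : dist p j ≤ ε := by
            rw [← h, dist_comm, dist_eq_norm, hz]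
          exact absurd (lt_of_lt_of_le hεδ (hδ j hj hjp)) (not_lt.2 h1)
      rw [circleIntegral.integral_congr hε0.le (fun z hz => hpt z (hsphere z hz))]
      have hint : ∀ j ∈ s, CircleIntegrable (fun z => (r j).eval z / (z - j) ^ (m j)) p ε := by
        intro j hj
        refine ContinuousOn.circleIntegrable hε0.le ?_
        refine ((r j).continuous_aeval.continuousOn).div
          (((continuous_id.sub continuous_const).pow _).continuousOn) ?_
        intro z hz
        exact pow_ne_zero _ (sub_ne_zero.2 (hsphere z hz j hj))
      rw [circleIntegral_finset_sum _ _ _ _ hint]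
      rw [Finset.sum_eq_single_of_mem p hp]
      · exact pole_integral p (m p) (hm1 p hp) (r p)
          (by have := hrle p hp; have := hm1 p hp; omega) hε0
      · intro j hj hjp
        refine pole_integral_zero p j (m j) (r j) hε0.le ?_
        intro z hz h
        rw [mem_closedBall] at hz
        have h1 : dist p j ≤ ε := by rw [← h, dist_comm]; exact hz
        exact absurd (lt_of_lt_of_le hεδ (hδ j hj hjp)) (not_lt.2 h1)
    have hmem : Set.Ioo (0 : ℝ) δ ∈ 𝓝[>] (0 : ℝ) :=
      Ioo_mem_nhdsGT_of_mem ⟨le_refl 0, hδ0⟩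
    obtain ⟨ε, hε1, hε2⟩ := ((hres p hp).and (eventually_of_mem hmem hclaim)).exists
    have h2pi : (2 * Real.pi * Complex.I : ℂ) ≠ 0 := by
      simp [Real.pi_ne_zero, Complex.I_ne_zero]
    exact mul_left_cancel₀ h2pi (hε1.symm.trans hε2)
  rw [Finset.sum_congr rfl hval, hsumcoeff]
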